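/- Nonnegativity in the anisotropic conformable Picone identity: let α ∈ (0,1], let Ω ⊆ (0,∞)^n be open, let p_k > 1 for k = 1,…,n, and let u, v : Ω → ℝ be differentiable with u ≥ 0 and v > 0 on Ω. Then L(u,v)(x) ≥ 0 for every x ∈ Ω. -/

import Mathlib

open Filter Topology

/-- The conformable partial derivative of order `α` in the `k`-th coordinate:
`D^α_{x_k} f (x) = x_k^{1-α} ∂f/∂x_k (x)`. -/
noncomputable def confPDeriv (α : ℝ) {n : ℕ} (f : (Fin n → ℝ) → ℝ) (k : Fin n)
    (x : Fin n → ℝ) : ℝ :=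
  (x k) ^ (1 - α) * deriv (fun t : ℝ => f (Function.update x k t)) (x k)

/-- The second form `L(u,v)` of the anisotropic conformable Picone identity. -/
noncomputable def piconeL (α : ℝ) {n : ℕ} (p : Fin n → ℝ)
    (u v : (Fin n → ℝ) → ℝ) (x : Fin n → ℝ) : ℝ :=
  (∑ k, |confPDeriv α u k x| ^ (p k))
    + (∑ k, (p k - 1) * (u x / v x) ^ (p k) * |confPDeriv α v k x| ^ (p k))
    - ∑ k, p k * (u x / v x) ^ (p k - 1) * |confPDeriv α v k x| ^ (p k - 2)
        * confPDeriv α u k x * confPDeriv α v k x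

lemma picone_term_key {a b t q : ℝ} (ht : 0 ≤ t) (hq : 1 < q) :
    q * t ^ (q - 1) * |b| ^ (q - 2) * a * b ≤ |a| ^ q + (q - 1) * t ^ q * |b| ^ q := by
  have hq0 : (0 : ℝ) < q := by linarith
  have hq1 : (0 : ℝ) < q - 1 := by linarith
  have hb : (0 : ℝ) ≤ |b| := abs_nonneg b
  have hbq : |b| ^ (q - 2) * b ≤ |b| ^ (q - 2) * |b| :=
    mul_le_mul_of_nonneg_left (le_abs_self b) (Real.rpow_nonneg hb _)
  have hbe : |b| ^ (q - 2) * |b| = |b| ^ (q - 1) := by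
    rcases eq_or_ne b 0 with h | h
    · simp [h, Real.zero_rpow (ne_of_gt hq1)]
    · have hb0 : (0 : ℝ) < |b| := abs_pos.mpr h
      rw [show q - 1 = (q - 2) + 1 by ring, Real.rpow_add hb0, Real.rpow_one]
  -- step 1: replace a*b by |a|*|b|^{q-1}
  have step1 : q * t ^ (q - 1) * |b| ^ (q - 2) * a * b
      ≤ q * (t ^ (q - 1) * (|a| * |b| ^ (q - 1))) := by
    have h1 : |b| ^ (q - 2) * (a * b) ≤ |b| ^ (q - 2) * (|a| * |b|) := by
      refine mul_le_mul_of_nonneg_left ?_ (Real.rpow_nonneg hb _)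
      calc a * b ≤ |a * b| := le_abs_self _
        _ = |a| * |b| := abs_mul a b
    have h2 : |b| ^ (q - 2) * (|a| * |b|) = |a| * |b| ^ (q - 1) := by
      rw [show |b| ^ (q - 2) * (|a| * |b|) = (|b| ^ (q - 2) * |b|) * |a| by ring, hbe]; ring
    have hc : (0:ℝ) ≤ q * t ^ (q - 1) :=
      mul_nonneg hq0.le (Real.rpow_nonneg ht (q - 1))
    calc q * t ^ (q - 1) * |b| ^ (q - 2) * a * b
        = (q * t ^ (q - 1)) * (|b| ^ (q - 2) * (a * b)) := by ring
      _ ≤ (q * t ^ (q - 1)) * (|b| ^ (q - 2) * (|a| * |b|)) :=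
          mul_le_mul_of_nonneg_left h1 hc
      _ = q * (t ^ (q - 1) * (|a| * |b| ^ (q - 1))) := by rw [h2]; ring
  -- step 2: Young's inequality
  set p' : ℝ := q / (q - 1) with hp'
  have hconj : q.HolderConjugate p' := Real.HolderConjugate.conjExponent hq
  have hyoung := Real.young_inequality_of_nonneg (abs_nonneg a)
      (Real.rpow_nonneg (mul_nonneg ht hb) (q - 1)) hconj
  have hB : (0:ℝ) ≤ t * |b| := mul_nonneg ht hb
  have hTB : ((t * |b|) ^ (q - 1)) ^ p' = (t * |b|) ^ q := by
    rw [← Real.rpow_mul hB]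
    rw [hp']
    congr 1
    field_simp
  have hmul : (t * |b|) ^ (q - 1) = t ^ (q - 1) * |b| ^ (q - 1) :=
    Real.mul_rpow ht hb
  rw [hTB, hmul] at hyoung
  have hp'pos : (0:ℝ) < p' := div_pos hq0 hq1
  have hp'inv : q / p' = q - 1 := by
    rw [div_eq_iff (ne_of_gt hp'pos), hp']
    field_simp
  have step2 : q * (t ^ (q - 1) * (|a| * |b| ^ (q - 1)))
      ≤ |a| ^ q + (q - 1) * ((t * |b|) ^ q) := by
    have := mul_le_mul_of_nonneg_left hyoung hq0.le
    calc q * (t ^ (q - 1) * (|a| * |b| ^ (q - 1)))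
        = q * (|a| * (t ^ (q - 1) * |b| ^ (q - 1))) := by ring
      _ ≤ q * (|a| ^ q / q + (t * |b|) ^ q / p') := this
      _ = |a| ^ q + (q / p') * (t * |b|) ^ q := by
          field_simp
      _ = |a| ^ q + (q - 1) * ((t * |b|) ^ q) := by rw [hp'inv]
  have hfinal : (t * |b|) ^ q = t ^ q * |b| ^ q := Real.mul_rpow ht hb
  rw [hfinal] at step2
  linarith [step1, step2]


/-- Nonnegativity in the anisotropic conformable Picone identity: `L(u,v) ≥ 0`. -/
theorem anisotropic_conformable_picone_nonneg (α : ℝ) (hα : α ∈ Set.Ioc (0 : ℝ) 1)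
    (n : ℕ) (Ω : Set (Fin n → ℝ)) (hΩ : IsOpen Ω)
    (hΩpos : Ω ⊆ {x : Fin n → ℝ | ∀ k, 0 < x k})
    (p : Fin n → ℝ) (hp : ∀ k, 1 < p k)
    (u v : (Fin n → ℝ) → ℝ)
    (hu : DifferentiableOn ℝ u Ω) (hv : DifferentiableOn ℝ v Ω)
    (hu0 : ∀ x ∈ Ω, 0 ≤ u x) (hv0 : ∀ x ∈ Ω, 0 < v x) :
    ∀ x ∈ Ω, 0 ≤ piconeL α p u v x := by
  intro x hx
  have ht : 0 ≤ u x / v x := div_nonneg (hu0 x hx) (hv0 x hx).le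
  unfold piconeL
  rw [← Finset.sum_add_distrib, ← Finset.sum_sub_distrib]
  refine Finset.sum_nonneg fun k _ => ?_
  have := picone_term_key (a := confPDeriv α u k x) (b := confPDeriv α v k x)
      ht (hp k)
  linarith
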